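/- If a binomial ideal I in the monoid algebra k[Q] is the kernel of a monomial homomorphism onto a (twisted) group algebra—i.e., I is a mesoprime—then every element of the quotient monoid Q/∼_I is either nil or cancellative; that is, the congruence induced by I is prime. -/
import Mathlib


open TensorProduct

/-! A mesoprime — the kernel of a monomial homomorphism from `k[Q]` onto a
twisted group algebra — induces a prime congruence on `Q`: every element of
the quotient monoid `Q/∼_I` is either nil or cancellative.

A twisted group algebra over `k` is a `G`-graded `k`-algebra (`G` an abelian
group) that becomes isomorphic, `G`-gradedly, to the group algebra after
extending scalars to the algebraic closure of `k`; a monomial homomorphism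
sends each monomial to a homogeneous element (possibly `0`). -/

variable {k : Type*} [Field k] {Q : Type*} [AddCommMonoid Q]

/-- The monomial `t^q` in the monoid algebra `k[Q]`. -/
noncomputable def mono (k : Type*) [Field k] {Q : Type*} [AddCommMonoid Q] (q : Q) :
    AddMonoidAlgebra k Q := AddMonoidAlgebra.single q 1

/-- The congruence induced by a binomial ideal. -/
def indCong (I : Ideal (AddMonoidAlgebra k Q)) (u v : Q) : Prop :=
  ∃ lam : k, lam ≠ 0 ∧ mono k u - lam • mono k v ∈ I

/-- Over a field, the map `r ↦ 1 ⊗ r` into a scalar extension by a (nonzero)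
`k`-algebra is injective. -/
lemma one_tmul_injective {A : Type*} [Ring A] [Algebra k A] [Nontrivial A]
    {M : Type*} [AddCommGroup M] [Module k M] :
    Function.Injective (fun m : M => (1 : A) ⊗ₜ[k] m) := by
  obtain ⟨g, hg⟩ := (Algebra.linearMap k A).exists_leftInverse_of_injective
    (LinearMap.ker_eq_bot.mpr (algebraMap k A).injective)
  have hg1 : g 1 = 1 := by
    have := congrArg (fun f => (f : k →ₗ[k] k) 1) hg
    simpa using this
  intro m₁ m₂ h
  have := congrArg ((TensorProduct.lid k M).toLinearMap ∘ₗ (LinearMap.rTensor M g)) h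
  simpa [hg1] using this

/-- If `I` is the kernel of a monomial homomorphism `φ : k[Q] → R` onto a
twisted group algebra `R` (graded by the abelian group `G`, with a graded
isomorphism to the group algebra over the algebraic closure of `k`), then the
congruence induced by `I` is prime: every element of `Q/∼_I` is nil or
cancellative. -/
theorem mesoprime_induces_prime_congruence
    {G : Type*} [AddCommGroup G] [DecidableEq G] {R : Type*} [CommRing R] [Algebra k R]
    (𝒜 : G → Submodule k R)
    (hinternal : DirectSum.IsInternal 𝒜)
    (hmul : ∀ g h : G, ∀ x ∈ 𝒜 g, ∀ y ∈ 𝒜 h, x * y ∈ 𝒜 (g + h))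
    (htwisted : ∃ e : (AlgebraicClosure k ⊗[k] R) ≃ₐ[AlgebraicClosure k]
        AddMonoidAlgebra (AlgebraicClosure k) G,
      ∀ g : G, ∀ x ∈ 𝒜 g, ∃ c : AlgebraicClosure k,
        e ((1 : AlgebraicClosure k) ⊗ₜ[k] x) = AddMonoidAlgebra.single g c)
    (φ : AddMonoidAlgebra k Q →ₐ[k] R)
    (hsurj : Function.Surjective φ)
    (hmono : ∀ q : Q, ∃ g : G, φ (mono k q) ∈ 𝒜 g)
    (I : Ideal (AddMonoidAlgebra k Q))
    (hI : I = RingHom.ker (φ : AddMonoidAlgebra k Q →+* R)) :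
    ∀ q : Q, (∀ a : Q, indCong I (a + q) q) ∨
      (∀ a b : Q, indCong I (q + a) (q + b) → indCong I a b) := by
  intro q
  by_cases hq : φ (mono k q) = 0
  · left
    intro a
    refine ⟨1, one_ne_zero, ?_⟩
    rw [hI, RingHom.mem_ker]
    show φ _ = 0
    have : mono k (a + q) = mono k a * mono k q := by
      simp [mono, AddMonoidAlgebra.single_mul_single]
    simp [this, map_mul, hq]
  · right
    rintro a b ⟨lam, hlam, hmem⟩
    refine ⟨lam, hlam, ?_⟩
    rw [hI, RingHom.mem_ker] at hmem ⊢
    have hmem' : φ (mono k (q + a) - lam • mono k (q + b)) = 0 := hmem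
    show φ _ = 0
    set x := φ (mono k q) with hx
    set y := φ (mono k a) - lam • φ (mono k b) with hy
    have hxy : x * y = 0 := by
      have h1 : mono k (q + a) = mono k q * mono k a := by
        simp [mono, AddMonoidAlgebra.single_mul_single]
      have h2 : mono k (q + b) = mono k q * mono k b := by
        simp [mono, AddMonoidAlgebra.single_mul_single]
      have := hmem'
      rw [map_sub, map_smul, h1, h2, map_mul, map_mul] at this
      rw [hy, mul_sub, mul_smul_comm]
      exact this
    obtain ⟨g, hg⟩ := hmono q
    obtain ⟨e, he⟩ := htwisted
    obtain ⟨c, hc⟩ := he g _ hg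
    have hinj : Function.Injective
        (fun r : R => (1 : AlgebraicClosure k) ⊗ₜ[k] r) := one_tmul_injective
    have hxne : (1 : AlgebraicClosure k) ⊗ₜ[k] x ≠ 0 := by
      intro h0
      exact hq (hinj (by simpa using h0))
    have hcne : c ≠ 0 := by
      intro h0
      apply hxne
      have h1 : e ((1 : AlgebraicClosure k) ⊗ₜ[k] x) = 0 := by
        rw [hx, hc, h0]; simp
      have := congrArg e.symm h1
      simpa using this
    -- invert `1 ⊗ x`
    set z := e.symm (AddMonoidAlgebra.single (-g) c⁻¹) with hz
    have hzx : z * ((1 : AlgebraicClosure k) ⊗ₜ[k] x) = 1 := by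
      apply e.injective
      rw [map_mul, map_one, hc, hz, AlgEquiv.apply_symm_apply,
        AddMonoidAlgebra.single_mul_single, neg_add_cancel, inv_mul_cancel₀ hcne]
      rfl
    have hty : (1 : AlgebraicClosure k) ⊗ₜ[k] y = 0 := by
      calc (1 : AlgebraicClosure k) ⊗ₜ[k] y
          = (z * ((1 : AlgebraicClosure k) ⊗ₜ[k] x)) * ((1 : AlgebraicClosure k) ⊗ₜ[k] y) := by
            rw [hzx, one_mul]
        _ = z * (((1 : AlgebraicClosure k) ⊗ₜ[k] x) * ((1 : AlgebraicClosure k) ⊗ₜ[k] y)) := by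
            ring
        _ = z * ((1 : AlgebraicClosure k) ⊗ₜ[k] (x * y)) := by
            rw [Algebra.TensorProduct.tmul_mul_tmul, one_mul]
        _ = 0 := by rw [hxy]; simp
    have hy0 : y = 0 := hinj (by simpa using hty)
    rw [map_sub, map_smul]
    rw [hy] at hy0
    exact hy0
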